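/- Let (W, ≤) be a well ordered set, and let ⊑ be the product order on ℕ₀ⁿ × {1,…,k} × W. Then there is no infinite strictly ascending chain D₁ ⊂ D₂ ⊂ ⋯ of upward closed subsets of ℕ₀ⁿ × {1,…,k} × W with respect to set inclusion. -/

import Mathlib

/-- The order `⊑` on `ℕ₀ⁿ × {1,…,k} × W`: componentwise on exponents, equality on the
position, and `≤` on `W`. -/
def SqLe {n k : ℕ} {W : Type*} [LinearOrder W]
    (d e : ((Fin n → ℕ) × Fin k) × W) : Prop :=
  (∀ m, d.1.1 m ≤ e.1.1 m) ∧ d.1.2 = e.1.2 ∧ d.2 ≤ e.2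

lemma sqle_pwo {n k : ℕ} {W : Type*} [LinearOrder W] [WellFoundedLT W] :
    (Set.univ : Set (((Fin n → ℕ) × Fin k) × W)).PartiallyWellOrderedOn SqLe := by
  have h1 : (Set.univ : Set (Fin n → ℕ)).PartiallyWellOrderedOn (· ≤ ·) := Set.isPWO_of_wellQuasiOrderedLE _
  have h2 : (Set.univ : Set (Fin k)).PartiallyWellOrderedOn (· = ·) :=
    Set.finite_univ.partiallyWellOrderedOn
  have h3 : (Set.univ : Set W).PartiallyWellOrderedOn (· ≤ ·) :=
    Set.IsPWO.of_linearOrder _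
  haveI : IsRefl ((Fin n → ℕ) × Fin k) (fun x y => x.1 ≤ y.1 ∧ x.2 = y.2) :=
    ⟨fun x => ⟨le_refl _, rfl⟩⟩
  haveI : IsTrans ((Fin n → ℕ) × Fin k) (fun x y => x.1 ≤ y.1 ∧ x.2 = y.2) :=
    ⟨fun _ _ _ h h' => ⟨h.1.trans h'.1, h.2.trans h'.2⟩⟩
  haveI : IsPreorder ((Fin n → ℕ) × Fin k) (fun x y => x.1 ≤ y.1 ∧ x.2 = y.2) :=
    { refl := fun x => ⟨le_refl _, rfl⟩, trans := fun _ _ _ h h' => ⟨h.1.trans h'.1, h.2.trans h'.2⟩ }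
  have h12 := h1.prod h2
  have h := h12.prod h3
  intro f
  obtain ⟨i, j, hij, hr⟩ := h (fun m => ⟨(f m).1, by simp [Set.mem_prod]⟩)
  exact ⟨i, j, hij, ⟨fun m => hr.1.1 m, hr.1.2, hr.2⟩⟩

/-- For a well ordered set `W`, there is no infinite strictly
ascending chain of upward closed subsets of `(ℕ₀ⁿ × {1,…,k} × W, ⊑)`. -/
theorem sqle_no_ascending_chain_of_upward_closed
    {n k : ℕ} {W : Type*} [LinearOrder W] [WellFoundedLT W] :
    ¬ ∃ D : ℕ → Set (((Fin n → ℕ) × Fin k) × W),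
      (∀ i, ∀ s ∈ D i, ∀ t, SqLe s t → t ∈ D i) ∧
      (∀ i, D i ⊂ D (i + 1)) := by
  rintro ⟨D, hup, hchain⟩
  have hmono : ∀ i j, i ≤ j → D i ⊆ D j := by
    intro i j hij
    induction j with
    | zero => simp_all
    | succ j ih =>
      rcases Nat.lt_or_ge i (j+1) with h | h
      · exact (ih (Nat.lt_succ_iff.mp h)).trans (hchain j).subset
      · have : i = j + 1 := le_antisymm hij h
        subst this; rfl
  choose x hx using fun i => Set.exists_of_ssubset (hchain i)
  obtain ⟨i, j, hij, hr⟩ := sqle_pwo (fun m => ⟨x m, Set.mem_univ _⟩)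
  exact (hx j).2 (hup j _ (hmono (i+1) j hij (hx i).1) _ hr)
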